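/- Let φ : k⟨X⟩ → k be a linear functional satisfying the trace property φ(pq) = φ(qp), positivity φ(f*f) ≥ 0, φ(1) = 1, symmetry φ(f*) = φ(f)*, and contractivity with respect to the 1-norm (i.e., |φ(Σ a_w w)| ≤ Σ |a_w|). Then φ(g*(1 - X_i^2)g) ≥ 0 for all g ∈ k⟨X⟩ and all i; consequently φ(M_k) ⊆ ℝ_{≥0}. -/

import Mathlib

abbrev NCPoly (k : Type) [CommSemiring k] (n : ℕ) := MonoidAlgebra k (FreeMonoid (Fin n))

noncomputable def ncWord (k : Type) [CommSemiring k] {n : ℕ} (w : FreeMonoid (Fin n)) : NCPoly k n :=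
  MonoidAlgebra.of k (FreeMonoid (Fin n)) w

noncomputable def ncX (k : Type) [CommSemiring k] {n : ℕ} (i : Fin n) : NCPoly k n :=
  ncWord k (FreeMonoid.of i)

/-- The involution on `k⟨X⟩` fixing the variables and conjugating coefficients. -/
noncomputable def ncStar {k : Type} [CommSemiring k] [StarRing k] {n : ℕ} (f : NCPoly k n) : NCPoly k n :=
  MonoidAlgebra.ofCoeff (Finsupp.mapDomain FreeMonoid.reverse (Finsupp.mapRange star (star_zero k) f.coeff))

/-- `f` and `g` are cyclically equivalent: `f - g` is a sum of commutators. -/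
def IsCyclicEquiv {k : Type} [CommRing k] {n : ℕ} (f g : NCPoly k n) : Prop :=
  f - g ∈ AddSubmonoid.closure {x : NCPoly k n | ∃ p q, x = p * q - q * p}

/-- The quadratic module generated by the `1 - X_i^2`: all finite sums of
elements `g* g` and `g* (1 - X_i^2) g`. -/
noncomputable def QuadMod (k : Type) [CommRing k] [StarRing k] (n : ℕ) : AddSubmonoid (NCPoly k n) :=
  AddSubmonoid.closure
    ({x | ∃ g : NCPoly k n, x = ncStar g * g} ∪
     {x | ∃ (g : NCPoly k n) (i : Fin n), x = ncStar g * (1 - (ncX k i) ^ 2) * g})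

/-- Evaluation of a noncommutative polynomial at a tuple of matrices. -/
noncomputable def ncEval {k : Type} [CommRing k] {n s : ℕ}
    (A : Fin n → Matrix (Fin s) (Fin s) k) :
    NCPoly k n →ₐ[k] Matrix (Fin s) (Fin s) k :=
  MonoidAlgebra.lift k (Matrix (Fin s) (Fin s) k) (FreeMonoid (Fin n)) (FreeMonoid.lift A)

/-- A self-adjoint contraction matrix: `A* = A` and `1 - A²` positive semidefinite. -/
def IsSAContraction {k : Type} [CommRing k] [StarRing k] [PartialOrder k] [StarOrderedRing k]
    {s : ℕ} (A : Matrix (Fin s) (Fin s) k) : Prop :=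
  A.IsHermitian ∧ (1 - A * A).PosSemidef

/-! ### Auxiliary lemmas -/

section aux
variable {k : Type} [CommSemiring k] [StarRing k] {n : ℕ}

lemma ncStar_single (w : FreeMonoid (Fin n)) (c : k) :
    ncStar (MonoidAlgebra.single w c) = MonoidAlgebra.single w.reverse (star c) := by
  unfold ncStar
  rw [MonoidAlgebra.coeff_single, Finsupp.mapRange_single, Finsupp.mapDomain_single]
  rfl

lemma ncStar_add (f g : NCPoly k n) : ncStar (f + g) = ncStar f + ncStar g := by
  unfold ncStar
  rw [MonoidAlgebra.coeff_add, Finsupp.mapRange_add star_add, Finsupp.mapDomain_add]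
  rfl

lemma ncStar_zero : ncStar (0 : NCPoly k n) = 0 := by
  unfold ncStar
  rw [show (0 : NCPoly k n).coeff = 0 from rfl, Finsupp.mapRange_zero, Finsupp.mapDomain_zero]
  rfl

noncomputable def ncStarHom : NCPoly k n →+ NCPoly k n :=
  { toFun := ncStar, map_zero' := ncStar_zero, map_add' := ncStar_add }

lemma ncStar_one : ncStar (1 : NCPoly k n) = 1 := by
  have h : (1 : NCPoly k n) = MonoidAlgebra.single 1 1 := rfl
  rw [h, ncStar_single]
  norm_num
  rfl

lemma ncStar_mul (f g : NCPoly k n) : ncStar (f * g) = ncStar g * ncStar f := by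
  induction f using MonoidAlgebra.induction_linear with
  | zero => simp [ncStar_zero]
  | add p q hp hq => rw [add_mul, ncStar_add, hp, hq, ncStar_add, mul_add]
  | single w c =>
    induction g using MonoidAlgebra.induction_linear with
    | zero => simp [ncStar_zero]
    | add p q hp hq => rw [mul_add, ncStar_add, hp, hq, ncStar_add, add_mul]
    | single v d =>
      rw [MonoidAlgebra.single_mul_single, ncStar_single, ncStar_single, ncStar_single,
        MonoidAlgebra.single_mul_single, FreeMonoid.reverse_mul, star_mul',
        mul_comm (star d) (star c)]

lemma ncStar_ncStar (f : NCPoly k n) : ncStar (ncStar f) = f := by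
  induction f using MonoidAlgebra.induction_linear with
  | zero => simp [ncStar_zero]
  | add p q hp hq => rw [ncStar_add, ncStar_add, hp, hq]
  | single w c => rw [ncStar_single, ncStar_single, FreeMonoid.reverse_reverse, star_star]

lemma ncStar_X (i : Fin n) : ncStar (ncX k i) = ncX k i := by
  have h : ncX k i = MonoidAlgebra.single (FreeMonoid.of i) 1 := rfl
  rw [h, ncStar_single, FreeMonoid.reverse_of, star_one]

lemma ncStar_X_pow (i : Fin n) (j : ℕ) : ncStar ((ncX k i) ^ j) = (ncX k i) ^ j := by
  induction j with
  | zero => simpa using ncStar_one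
  | succ j ih => rw [pow_succ, ncStar_mul, ih, ncStar_X, ← pow_succ']; rw [← pow_succ]

end aux

section auxring
variable {k : Type} [CommRing k] [StarRing k] {n : ℕ}

lemma ncStar_sub (f g : NCPoly k n) : ncStar (f - g) = ncStar f - ncStar g :=
  map_sub (ncStarHom : NCPoly k n →+ NCPoly k n) f g

lemma ncStar_b (i : Fin n) : ncStar (1 - (ncX k i) ^ 2) = 1 - (ncX k i) ^ 2 := by
  rw [ncStar_sub, ncStar_one, ncStar_X_pow]

end auxring

lemma key_id {R : Type*} [Ring R] (a : R) (m : ℕ) :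
    (m+1) • (1 - a) + a^(m+1)
      = 1 + ∑ j ∈ Finset.range m, (m-j) • ((1-a)*(1-a)*a^j) := by
  induction m with
  | zero => simp
  | succ m ih =>
    set b := 1 - a with hb
    have hcomm : ∀ j : ℕ, Commute b (a^j) := fun j =>
      ((Commute.one_left a).sub_left (Commute.refl a)).pow_right j
    have hgeom : b * ∑ j ∈ Finset.range (m+1), a^j = 1 - a^(m+1) := by
      have h0 := geom_sum_mul a (m+1)
      have h2 : (∑ j ∈ Finset.range (m+1), a^j) * b = 1 - a^(m+1) := by
        have h3 : (∑ j ∈ Finset.range (m+1), a^j) * b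
            = -((∑ j ∈ Finset.range (m+1), a^j) * (a-1)) := by
          rw [hb]; noncomm_ring
        rw [h3, h0, neg_sub]
      have h4 : Commute b (∑ j ∈ Finset.range (m+1), a^j) :=
        Commute.sum_right _ _ _ (fun j _ => hcomm j)
      rw [← h2, h4.eq]
    have hsum : ∑ j ∈ Finset.range (m+1), (m+1-j) • (b*b*a^j)
        = (∑ j ∈ Finset.range m, (m-j) • (b*b*a^j)) + (b - b*a^(m+1)) := by
      have hc : ∀ j ∈ Finset.range (m+1), (m+1-j) • (b*b*a^j) = (m-j) • (b*b*a^j) + b*b*a^j := by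
        intro j hj
        rw [Finset.mem_range] at hj
        rw [← succ_nsmul]
        congr 1
        omega
      rw [Finset.sum_congr rfl hc, Finset.sum_add_distrib, Finset.sum_range_succ,
        Nat.sub_self, zero_smul, add_zero, ← Finset.mul_sum, mul_assoc, hgeom,
        mul_one_sub b (a^(m+1))]
    rw [hsum, ← add_assoc, ← ih]
    have hba : b * a^(m+1) = a^(m+1) - a^(m+1+1) := by
      rw [hb, sub_mul, one_mul, ← pow_succ']
    rw [succ_nsmul, hba]
    abel

lemma single_one_mul_eq_mapDomain {k : Type} [CommSemiring k] {M : Type*} [Monoid M]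
    (w : M) (h : MonoidAlgebra k M) :
    MonoidAlgebra.single w (1:k) * h = MonoidAlgebra.mapDomain (w * ·) h := by
  induction h using MonoidAlgebra.induction_linear with
  | zero => simp
  | add p q hp hq => rw [mul_add, hp, hq, MonoidAlgebra.mapDomain_add]
  | single v d => rw [MonoidAlgebra.single_mul_single, one_mul, MonoidAlgebra.mapDomain_single]

lemma l1_single_one_mul {k : Type} [RCLike k] {M : Type*} [Monoid M] [IsCancelMul M]
    (w : M) (h : MonoidAlgebra k M) :
    ∑ u ∈ (MonoidAlgebra.single w (1:k) * h).coeff.support, ‖(MonoidAlgebra.single w (1:k) * h).coeff u‖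
      = ∑ v ∈ h.coeff.support, ‖h.coeff v‖ := by
  classical
  rw [single_one_mul_eq_mapDomain]
  show ∑ u ∈ (Finsupp.mapDomain (w * ·) h.coeff).support, ‖(Finsupp.mapDomain (w * ·) h.coeff) u‖ = _
  have hinj : Function.Injective (w * ·) := fun a b hab => mul_left_cancel hab
  rw [Finsupp.mapDomain_support_of_injective hinj, Finset.sum_image (fun a _ b _ hh => hinj hh)]
  exact Finset.sum_congr rfl (fun v hv => by rw [Finsupp.mapDomain_apply hinj])

/-- The nonnegative-real elements of `k`, as an additive submonoid. -/
noncomputable def PosCone (k : Type) [RCLike k] : AddSubmonoid k where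
  carrier := {z | ∃ r : ℝ, 0 ≤ r ∧ z = algebraMap ℝ k r}
  zero_mem' := ⟨0, le_refl _, (map_zero _).symm⟩
  add_mem' := by
    rintro x y ⟨r, hr, rfl⟩ ⟨s, hs, rfl⟩
    exact ⟨r + s, by positivity, (map_add _ _ _).symm⟩

theorem stmt10 {k : Type} [RCLike k] {n : ℕ} (φ : NCPoly k n →ₗ[k] k)
    (htr : ∀ p q : NCPoly k n, φ (p * q) = φ (q * p))
    (hpos : ∀ f : NCPoly k n, ∃ r : ℝ, 0 ≤ r ∧ φ (ncStar f * f) = algebraMap ℝ k r)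
    (h1 : φ 1 = 1)
    (hstar : ∀ f : NCPoly k n, φ (ncStar f) = star (φ f))
    (hcontr : ∀ f : NCPoly k n, ‖φ f‖ ≤ ∑ w ∈ f.coeff.support, ‖f.coeff w‖) :
    (∀ (g : NCPoly k n) (i : Fin n),
      ∃ r : ℝ, 0 ≤ r ∧ φ (ncStar g * (1 - (ncX k i) ^ 2) * g) = algebraMap ℝ k r) ∧
    (∀ a ∈ QuadMod k n, ∃ r : ℝ, 0 ≤ r ∧ φ a = algebraMap ℝ k r) := by
  have main : ∀ (g : NCPoly k n) (i : Fin n),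
      ∃ r : ℝ, 0 ≤ r ∧ φ (ncStar g * (1 - (ncX k i) ^ 2) * g) = algebraMap ℝ k r := by
    intro g i
    set X : NCPoly k n := ncX k i with hX
    set a : NCPoly k n := X ^ 2 with ha
    set b : NCPoly k n := 1 - a with hb
    -- the value is real
    have hsa : ncStar (ncStar g * b * g) = ncStar g * b * g := by
      rw [ncStar_mul, ncStar_mul, ncStar_ncStar, hb, ha, hX, ncStar_b, ← hX, ← ha, ← hb,
        mul_assoc]
    have hreal : star (φ (ncStar g * b * g)) = φ (ncStar g * b * g) := by
      rw [← hstar, hsa]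
    set ρ : ℝ := RCLike.re (φ (ncStar g * b * g)) with hρdef
    have hρ : φ (ncStar g * b * g) = algebraMap ℝ k ρ := by
      rw [RCLike.algebraMap_eq_ofReal]
      exact (RCLike.conj_eq_iff_re.mp hreal).symm
    -- claim A: each conjugated generator lands in PosCone
    have hA : ∀ j : ℕ, φ (ncStar g * (b*b*a^j) * g) ∈ PosCone k := by
      intro j
      have cXb : Commute (X^j) b := by
        have : Commute X b :=
          (Commute.one_right X).sub_right ((Commute.refl X).pow_right 2)
        exact this.pow_left j
      have cXbb : Commute (X^j) (b*b) := cXb.mul_right cXb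
      have hmid : b*b*a^j = (X^j*b)*(b*X^j) := by
        have haj : a^j = X^j * X^j := by
          rw [ha, ← pow_mul, two_mul, pow_add]
        calc b*b*a^j = b*b*(X^j*X^j) := by rw [haj]
          _ = ((b*b)*X^j)*X^j := by simp only [mul_assoc]
          _ = (X^j*(b*b))*X^j := by rw [cXbb.eq]
          _ = (X^j*b)*(b*X^j) := by simp only [mul_assoc]
      have hfact : ncStar g * (b*b*a^j) * g = ncStar ((b*X^j)*g) * ((b*X^j)*g) := by
        rw [hmid, ncStar_mul, ncStar_mul, hb, ha, hX, ncStar_b, ncStar_X_pow, ← hX, ← ha, ← hb]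
        simp only [mul_assoc]
      rw [hfact]
      exact hpos _
    -- the ℓ¹ bound
    set h0 : NCPoly k n := g * ncStar g with hh0
    set C : ℝ := ∑ v ∈ h0.coeff.support, ‖h0.coeff v‖ with hC
    have hbound : ∀ m : ℕ, ‖φ (ncStar g * a^(m+1) * g)‖ ≤ C := by
      intro m
      have t1 : φ (ncStar g * a^(m+1) * g) = φ (a^(m+1) * h0) := by
        rw [htr (ncStar g * a^(m+1)) g, ← mul_assoc, htr (g * ncStar g) (a^(m+1)), hh0]
      have t2 : a^(m+1) = MonoidAlgebra.single ((FreeMonoid.of i)^(2*(m+1))) (1:k) := by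
        rw [ha, hX, ← pow_mul]
        have : ncX k i = MonoidAlgebra.single (FreeMonoid.of i) (1:k) := rfl
        rw [this, MonoidAlgebra.single_pow, one_pow]
      rw [t1, t2]
      calc ‖φ (MonoidAlgebra.single ((FreeMonoid.of i)^(2*(m+1))) (1:k) * h0)‖
          ≤ ∑ u ∈ (MonoidAlgebra.single ((FreeMonoid.of i)^(2*(m+1))) (1:k) * h0).coeff.support,
              ‖(MonoidAlgebra.single ((FreeMonoid.of i)^(2*(m+1))) (1:k) * h0).coeff u‖ := hcontr _
        _ = C := l1_single_one_mul _ _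
    -- the key inequality for each m
    have hineq : ∀ m : ℕ, -C ≤ (m+1 : ℝ) * ρ := by
      intro m
      have hkey := key_id a m
      have hφ := congrArg (fun x => φ (ncStar g * x * g)) hkey
      simp only [mul_add, add_mul, mul_one, Finset.mul_sum, Finset.sum_mul,
        mul_smul_comm, smul_mul_assoc, map_add, map_sum, map_nsmul] at hφ
      -- hφ : (m+1) • φ (g* b g) + φ (g* a^(m+1) g) = φ (g* g) + ∑ j, (m-j) • φ (g* (b b a^j) g)
      have hrhs : φ (ncStar g * g) + ∑ j ∈ Finset.range m, (m-j) • φ (ncStar g * (b*b*a^j) * g)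
          ∈ PosCone k := by
        refine AddSubmonoid.add_mem _ ?_ (AddSubmonoid.sum_mem _ (fun j _ => ?_))
        · exact hpos g
        · exact AddSubmonoid.nsmul_mem _ (hA j) _
      obtain ⟨u, hu0, hu⟩ := hrhs
      have heq : (m+1) • φ (ncStar g * b * g) + φ (ncStar g * a^(m+1) * g)
          = algebraMap ℝ k u := by
        rw [← hu]
        convert hφ using 2 <;> simp only [mul_assoc]
      have hval : φ (ncStar g * a^(m+1) * g) = algebraMap ℝ k (u - (m+1) * ρ) := by
        have : φ (ncStar g * a^(m+1) * g) = algebraMap ℝ k u - (m+1) • algebraMap ℝ k ρ := by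
          rw [← heq, hρ]; abel
        rw [this, map_sub]
        congr 1
        rw [nsmul_eq_mul, ← map_natCast (algebraMap ℝ k) (m+1), ← map_mul]
        push_cast
        ring_nf
      have hnorm : |u - (m+1 : ℝ) * ρ| ≤ C := by
        have := hbound m
        rw [hval, RCLike.algebraMap_eq_ofReal, RCLike.norm_ofReal] at this
        convert this using 3
      have h1' : u - (m+1:ℝ) * ρ ≤ C := le_trans (le_abs_self _) hnorm
      nlinarith
    -- conclude ρ ≥ 0
    have hρ0 : 0 ≤ ρ := by
      by_contra hneg
      push_neg at hneg
      obtain ⟨m, hm⟩ := exists_nat_gt (C / (-ρ))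
      have hρpos : 0 < -ρ := by linarith
      have : C < (m : ℝ) * (-ρ) := by
        rwa [div_lt_iff₀ hρpos] at hm
      have h2 : (m:ℝ) * (-ρ) ≤ (m+1:ℝ) * (-ρ) := by nlinarith
      have := hineq m
      nlinarith
    exact ⟨ρ, hρ0, hρ⟩
  constructor
  · exact main
  · intro x hx
    have hsub : QuadMod k n ≤ (PosCone k).comap (φ : NCPoly k n →ₗ[k] k).toAddMonoidHom := by
      rw [QuadMod]
      rw [AddSubmonoid.closure_le]
      rintro y (⟨g, rfl⟩ | ⟨g, i, rfl⟩)
      · exact hpos g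
      · exact main g i
    exact hsub hx
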